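/- Let α, β ∈ ℕ with α, β > 1 be multiplicatively independent. Then there exists a prime number p such that ν_p(β) > 0 and log(α)/log(β) > ν_p(α)/ν_p(β), where ν_p(x) denotes the p-adic valuation of x (the largest n such that p^n divides x). -/
import Mathlib


/-- Let `α, β > 1` be multiplicatively independent natural numbers. Then there is a prime `p`
with `ν_p(β) > 0` and `log(α)/log(β) > ν_p(α)/ν_p(β)`. -/
theorem exists_good_prime (α β : ℕ) (hα : 1 < α) (hβ : 1 < β)
    (hind : ∀ n₁ n₂ : ℕ, α ^ n₁ = β ^ n₂ → n₁ = 0 ∧ n₂ = 0) :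
    ∃ p : ℕ, p.Prime ∧ 0 < padicValNat p β ∧
      (padicValNat p α : ℝ) / (padicValNat p β : ℝ) < Real.log α / Real.log β := by
  have hβ0 : β ≠ 0 := by omega
  have hα0 : α ≠ 0 := by omega
  have hne : β.primeFactors.Nonempty := Nat.nonempty_primeFactors.mpr hβ
  obtain ⟨p, hpS, hmin⟩ := Finset.exists_min_image β.primeFactors
    (fun q => (padicValNat q α : ℚ) / (padicValNat q β : ℚ)) hne
  have hp : p.Prime := Nat.prime_of_mem_primeFactors hpS
  have hpd : p ∣ β := Nat.dvd_of_mem_primeFactors hpS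
  have hb : 0 < padicValNat p β := by
    haveI : Fact p.Prime := ⟨hp⟩
    exact one_le_padicValNat_of_dvd (by omega) hpd
  set a := padicValNat p α with ha
  set b := padicValNat p β with hbdef
  -- key: β ^ a ∣ α ^ b
  have hdvd : β ^ a ∣ α ^ b := by
    rw [← Nat.factorization_le_iff_dvd (pow_ne_zero _ hβ0) (pow_ne_zero _ hα0)]
    intro q
    rw [Nat.factorization_pow, Nat.factorization_pow]
    simp only [Finsupp.smul_apply, smul_eq_mul]
    by_cases hq : q ∈ β.primeFactors
    · have hqp : q.Prime := Nat.prime_of_mem_primeFactors hq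
      have hqb : 0 < padicValNat q β := by
        haveI : Fact q.Prime := ⟨hqp⟩
        exact one_le_padicValNat_of_dvd (by omega) (Nat.dvd_of_mem_primeFactors hq)
      have := hmin q hq
      have hineq : a * padicValNat q β ≤ padicValNat q α * b := by
        have h1 : (0:ℚ) < (padicValNat p β : ℚ) := by exact_mod_cast hb
        have h2 : (0:ℚ) < (padicValNat q β : ℚ) := by exact_mod_cast hqb
        rw [div_le_div_iff₀ h1 h2] at this
        exact_mod_cast this
      rw [Nat.factorization_def β hqp, Nat.factorization_def α hqp, mul_comm b]
      exact hineq
    · have : β.factorization q = 0 := by rwa [← Nat.support_factorization, Finsupp.notMem_support_iff] at hq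
      simp [this]
  have hle : β ^ a ≤ α ^ b := Nat.le_of_dvd (pow_pos (by omega) _) hdvd
  have hlt : β ^ a < α ^ b := by
    rcases lt_or_eq_of_le hle with h | h
    · exact h
    · exact absurd ((hind b a h.symm).1) (by omega)
  -- pass to logs
  have hlogβ : 0 < Real.log β := Real.log_pos (by exact_mod_cast hβ)
  have hbR : (0:ℝ) < (b : ℝ) := by exact_mod_cast hb
  refine ⟨p, hp, hb, ?_⟩
  rw [div_lt_div_iff₀ hbR hlogβ]
  have : Real.log ((β:ℝ) ^ a) < Real.log ((α:ℝ) ^ b) := by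
    apply Real.log_lt_log (by positivity)
    exact_mod_cast hlt
  rw [Real.log_pow, Real.log_pow] at this
  linarith
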